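/- The *-limit estimator γ~ = B_{k,P-1}(φ_•)/B_{k,P}(φ_•) has expectation E*(γ~) = γ(1 - (φ_1 γ)^k / σ_k(γ)) < γ under the distribution P*(P_k = p) = γ^p B_{k,p}(φ_•)/σ_k(γ); in particular γ~ is a negatively biased estimator of γ. -/

import Mathlib

open Finset

/-- The local exponential generating function `φ(x) = Σ_{m≥1} (φ_m/m!) x^m`
as a formal power series. -/
noncomputable def phiPS (φ : ℕ → ℝ) : PowerSeries ℝ :=
  PowerSeries.mk fun m => if m = 0 then 0 else φ m / m.factorial

lemma const_phi (φ : ℕ → ℝ) : PowerSeries.constantCoeff (R := ℝ) (phiPS φ) = 0 := by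
  simp [phiPS, ← PowerSeries.coeff_zero_eq_constantCoeff]

lemma coeff_phi_pow_lt (φ : ℕ → ℝ) {j n : ℕ} (h : j < n) :
    PowerSeries.coeff (R := ℝ) j (phiPS φ ^ n) = 0 := by
  have hX : (PowerSeries.X : PowerSeries ℝ) ∣ phiPS φ :=
    PowerSeries.X_dvd_iff.2 (const_phi φ)
  have : (PowerSeries.X : PowerSeries ℝ) ^ n ∣ phiPS φ ^ n := pow_dvd_pow_of_dvd hX n
  exact (PowerSeries.X_pow_dvd_iff.1 this) j h

lemma coeff_phi_pow_self (φ : ℕ → ℝ) (n : ℕ) :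
    PowerSeries.coeff (R := ℝ) n (phiPS φ ^ n) = (φ 1) ^ n := by
  induction n with
  | zero => simp
  | succ n ih =>
    rw [pow_succ, mul_comm, PowerSeries.coeff_mul]
    rw [Finset.sum_eq_single (1, n)]
    · have : PowerSeries.coeff (R := ℝ) 1 (phiPS φ) = φ 1 := by simp [phiPS]
      rw [this, ih, pow_succ, mul_comm]
    · rintro ⟨i, j⟩ hmem hne
      rw [Finset.HasAntidiagonal.mem_antidiagonal] at hmem
      rcases lt_trichotomy j n with hj | hj | hj
      · rw [coeff_phi_pow_lt φ hj, mul_zero]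
      · exfalso; apply hne
        simp only [Prod.mk.injEq]
        constructor <;> omega
      · have hi : i = 0 := by simp at hmem; omega
        subst hi
        simp [phiPS]
    · intro h
      exact absurd (Finset.HasAntidiagonal.mem_antidiagonal.2 (by omega)) h


/-- `σ_k(θ) := k! [x^k] exp(θ φ(x))`, where the coefficient of the composed
exponential is computed termwise (φ has zero constant term, so only `l ≤ k`
contribute). -/
noncomputable def sigmaP (φ : ℕ → ℝ) (k : ℕ) (θ : ℝ) : ℝ :=
  (k.factorial : ℝ) *
    ∑ l ∈ Finset.range (k + 1),
      θ ^ l / l.factorial * PowerSeries.coeff (R := ℝ) k (phiPS φ ^ l)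


/-- The Bell exponential polynomial `B_{k,l}(φ_•) = (k!/l!) [x^k] φ(x)^l`. -/
noncomputable def BellB (φ : ℕ → ℝ) (k l : ℕ) : ℝ :=
  ((k.factorial : ℝ) / l.factorial) * PowerSeries.coeff (R := ℝ) k (phiPS φ ^ l)

lemma sigma_eq (φ : ℕ → ℝ) (k : ℕ) (θ : ℝ) :
    sigmaP φ k θ = ∑ l ∈ Finset.range (k + 1), θ ^ l * BellB φ k l := by
  rw [sigmaP, Finset.mul_sum]
  refine Finset.sum_congr rfl fun l _ => ?_
  rw [BellB]; ring

lemma BellB_zero (φ : ℕ → ℝ) {k : ℕ} (hk : 1 ≤ k) : BellB φ k 0 = 0 := by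
  rw [BellB, pow_zero, PowerSeries.coeff_one, if_neg (by omega : ¬ k = 0), mul_zero]

lemma BellB_self (φ : ℕ → ℝ) (k : ℕ) : BellB φ k k = (φ 1) ^ k := by
  rw [BellB, coeff_phi_pow_self, div_self (by exact_mod_cast k.factorial_ne_zero), one_mul]


theorem stmt15 (φ : ℕ → ℝ) (hφ1 : 0 < φ 1) (hφ : ∀ m, 0 ≤ φ m)
    (γ : ℝ) (hγ : 0 < γ) (k : ℕ) (hk : 1 ≤ k)
    (hB : ∀ p, 1 ≤ p → p ≤ k → 0 < BellB φ k p) :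
    ∑ p ∈ Finset.Icc 1 k,
        (BellB φ k (p - 1) / BellB φ k p) * (γ ^ p * BellB φ k p / sigmaP φ k γ) =
      γ * (1 - (φ 1 * γ) ^ k / sigmaP φ k γ) ∧
    ∑ p ∈ Finset.Icc 1 k,
        (BellB φ k (p - 1) / BellB φ k p) * (γ ^ p * BellB φ k p / sigmaP φ k γ) < γ := by
  have hσpos : 0 < sigmaP φ k γ := by
    rw [sigma_eq]
    apply Finset.sum_pos'
    · intro l hl
      rcases Nat.eq_zero_or_pos l with h0 | h1
      · subst h0; rw [BellB_zero φ hk]; simp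
      · exact le_of_lt (mul_pos (pow_pos hγ l)
          (hB l h1 (by simpa using Nat.lt_succ_iff.mp (Finset.mem_range.mp hl))))
    · exact ⟨k, Finset.mem_range.2 (Nat.lt_succ_self k),
        mul_pos (pow_pos hγ k) (hB k hk le_rfl)⟩
  have hσne : sigmaP φ k γ ≠ 0 := ne_of_gt hσpos
  have hmain : ∑ p ∈ Finset.Icc 1 k,
      (BellB φ k (p - 1) / BellB φ k p) * (γ ^ p * BellB φ k p / sigmaP φ k γ) =
      γ * (1 - (φ 1 * γ) ^ k / sigmaP φ k γ) := by
    have step1 : ∀ p ∈ Finset.Icc 1 k,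
        (BellB φ k (p - 1) / BellB φ k p) * (γ ^ p * BellB φ k p / sigmaP φ k γ)
        = BellB φ k (p - 1) * γ ^ p / sigmaP φ k γ := by
      intro p hp
      rw [Finset.mem_Icc] at hp
      have hBp : BellB φ k p ≠ 0 := ne_of_gt (hB p hp.1 hp.2)
      field_simp
    rw [Finset.sum_congr rfl step1]
    have step2 : ∑ p ∈ Finset.Icc 1 k, BellB φ k (p - 1) * γ ^ p / sigmaP φ k γ
        = ∑ i ∈ Finset.range k, BellB φ k i * γ ^ (i + 1) / sigmaP φ k γ := by
      rw [← Finset.Ico_add_one_right_eq_Icc, Finset.sum_Ico_eq_sum_range]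
      refine Finset.sum_congr (by norm_num) fun i _ => ?_
      rw [add_comm 1 i, Nat.add_sub_cancel]
    rw [step2]
    have step3 : ∑ i ∈ Finset.range k, BellB φ k i * γ ^ (i + 1)
        = γ * (sigmaP φ k γ - (φ 1 * γ) ^ k) := by
      have : ∑ i ∈ Finset.range k, BellB φ k i * γ ^ (i + 1)
          = γ * ∑ i ∈ Finset.range k, γ ^ i * BellB φ k i := by
        rw [Finset.mul_sum]
        exact Finset.sum_congr rfl fun i _ => by ring
      rw [this, sigma_eq, Finset.sum_range_succ, BellB_self]
      ring
    rw [← Finset.sum_div, step3]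
    field_simp
  refine ⟨hmain, ?_⟩
  rw [hmain]
  have : 0 < (φ 1 * γ) ^ k / sigmaP φ k γ :=
    div_pos (pow_pos (mul_pos hφ1 hγ) k) hσpos
  nlinarith
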